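/- Let k ∈ ℕ, L ∈ ℕ*, and let f : [0,∞) → ℝ be of class C^{k+1} with all derivatives up to order k+1 bounded by a constant times 1 + x^L. Define f₀(x) = f(x) − f(0) and (M₋₁ f₀)(x) = f₀(x)/x for x > 0. Then M₋₁ f₀ extends to a C^k function on [0,∞), and there is a constant C (depending only on k) such that for every j ∈ {0, …, k}, sup_{x≥0} |(M₋₁f₀)^{(j)}(x)|/(1 + x^L) ≤ 2^k max_{0≤i≤j+1} sup_{x≥0} |f^{(i)}(x)|/(1 + x^L). -/

import Mathlib

open Set MeasureTheory Filter Topology Metric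

/-- The weighted norm `‖f‖_{m,L} = max_{0≤j≤m} sup_{x≥0} |f^{(j)}(x)|/(1+x^L)`
(derivatives taken within `[0,∞)`). -/
noncomputable def normML (m L : ℕ) (f : ℝ → ℝ) : ℝ :=
  ⨆ j : Fin (m + 1), ⨆ x : Set.Ici (0 : ℝ),
    |iteratedDerivWithin (j : ℕ) f (Set.Ici 0) (x : ℝ)| / (1 + (x : ℝ) ^ L)

private lemma aux_int (h : ℝ → ℝ) (hh : ContinuousOn h (Set.Ici 0)) (j : ℕ) {x : ℝ}
    (hx : 0 ≤ x) : IntegrableOn (fun t : ℝ => t ^ j * h (t * x)) (Set.Ioc 0 1) := by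
  have hc : ContinuousOn (fun t : ℝ => t ^ j * h (t * x)) (Set.Icc 0 1) := by
    refine ContinuousOn.mul (by fun_prop) (hh.comp (by fun_prop) fun t ht => ?_)
    exact mul_nonneg ht.1 hx
  exact hc.integrableOn_Icc.mono_set Set.Ioc_subset_Icc_self

private lemma aux_cont (h : ℝ → ℝ) (hh : ContinuousOn h (Set.Ici 0)) (j : ℕ) :
    ContinuousOn (fun x => ∫ t in Set.Ioc (0:ℝ) 1, t ^ j * h (t * x)) (Set.Ici 0) := by
  intro x₀ hx₀
  obtain ⟨M, hM⟩ := (isCompact_Icc (a := (0:ℝ)) (b := x₀ + 1)).exists_bound_of_continuousOn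
    (hh.mono fun y hy => hy.1)
  have hmem : ∀ᶠ x in 𝓝[Set.Ici 0] x₀, x ∈ Set.Icc 0 (x₀ + 1) := by
    have h1 : Set.Iic (x₀ + 1) ∈ 𝓝[Set.Ici 0] x₀ :=
      mem_nhdsWithin_of_mem_nhds (Iic_mem_nhds (by simp only [Set.mem_Ici] at hx₀; linarith))
    filter_upwards [self_mem_nhdsWithin, h1] with x h2 h3 using ⟨h2, h3⟩
  have key : Tendsto (fun x => ∫ t in Set.Ioc (0:ℝ) 1, t ^ j * h (t * x)) (𝓝[Set.Ici 0] x₀)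
      (𝓝 (∫ t in Set.Ioc (0:ℝ) 1, t ^ j * h (t * x₀))) := by
    apply tendsto_integral_filter_of_dominated_convergence (fun _ => M)
    · filter_upwards [self_mem_nhdsWithin] with x hx
      exact (aux_int h hh j hx).aestronglyMeasurable
    · filter_upwards [hmem] with x hx
      filter_upwards [ae_restrict_mem measurableSet_Ioc] with t ht
      have h1 : t * x ∈ Set.Icc (0:ℝ) (x₀ + 1) :=
        ⟨mul_nonneg ht.1.le hx.1, (mul_le_of_le_one_left hx.1 ht.2).trans hx.2⟩
      calc ‖t ^ j * h (t * x)‖ = t ^ j * |h (t * x)| := by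
            rw [norm_mul, Real.norm_eq_abs, Real.norm_eq_abs,
              abs_of_nonneg (pow_nonneg ht.1.le _)]
        _ ≤ 1 * M := mul_le_mul (pow_le_one₀ ht.1.le ht.2)
            (by simpa using hM _ h1) (abs_nonneg _) zero_le_one
        _ = M := one_mul M
    · exact integrable_const M
    · filter_upwards [ae_restrict_mem measurableSet_Ioc] with t ht
      have h1 : Tendsto (fun x => t * x) (𝓝[Set.Ici 0] x₀) (𝓝[Set.Ici 0] (t * x₀)) := by
        apply ContinuousWithinAt.tendsto_nhdsWithin ((continuous_const.mul continuous_id).continuousWithinAt)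
        exact fun y hy => mul_nonneg ht.1.le hy
      exact ((hh (t * x₀) (mul_nonneg ht.1.le hx₀)).tendsto.comp h1).const_mul _
  exact key

private lemma aux_deriv (h h' : ℝ → ℝ) (hh : ContinuousOn h (Set.Ici 0))
    (hh' : ContinuousOn h' (Set.Ici 0))
    (hder : ∀ y ∈ Set.Ici (0:ℝ), HasDerivWithinAt h (h' y) (Set.Ici 0) y) (j : ℕ)
    {x : ℝ} (hx : x ∈ Set.Ici (0:ℝ)) :
    HasDerivWithinAt (fun x => ∫ t in Set.Ioc (0:ℝ) 1, t ^ j * h (t * x))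
      (∫ t in Set.Ioc (0:ℝ) 1, t ^ (j + 1) * h' (t * x)) (Set.Ici 0) x := by
  have key : ∀ y : ℝ, 0 < y → HasDerivAt (fun x => ∫ t in Set.Ioc (0:ℝ) 1, t ^ j * h (t * x))
      (∫ t in Set.Ioc (0:ℝ) 1, t ^ (j + 1) * h' (t * y)) y := by
    intro y hy
    obtain ⟨M, hM⟩ := (isCompact_Icc (a := (0:ℝ)) (b := 2 * y)).exists_bound_of_continuousOn
      (hh'.mono fun z hz => hz.1)
    have hball : ∀ z ∈ ball y (y / 2), 0 < z ∧ z ≤ 2 * y := by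
      intro z hz
      rw [mem_ball, Real.dist_eq, abs_lt] at hz
      constructor <;> linarith
    exact (hasDerivAt_integral_of_dominated_loc_of_deriv_le
      (μ := volume.restrict (Set.Ioc 0 1))
      (F := fun x t => t ^ j * h (t * x)) (F' := fun x t => t ^ (j + 1) * h' (t * x))
      (x₀ := y) (bound := fun _ => M) (ball_mem_nhds y (half_pos hy))
      (by filter_upwards [eventually_gt_nhds hy] with x hx using
        (aux_int h hh j hx.le).aestronglyMeasurable)
      (aux_int h hh j hy.le)
      ((aux_int h' hh' (j + 1) hy.le).aestronglyMeasurable)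
      (by
        filter_upwards [ae_restrict_mem measurableSet_Ioc] with t ht
        intro z hz
        obtain ⟨hz0, hz2⟩ := hball z hz
        have h1 : t * z ∈ Set.Icc (0:ℝ) (2 * y) :=
          ⟨mul_nonneg ht.1.le hz0.le, (mul_le_of_le_one_left hz0.le ht.2).trans hz2⟩
        calc ‖t ^ (j + 1) * h' (t * z)‖ = t ^ (j + 1) * |h' (t * z)| := by
              rw [norm_mul, Real.norm_eq_abs, Real.norm_eq_abs,
                abs_of_nonneg (pow_nonneg ht.1.le _)]
          _ ≤ 1 * M := mul_le_mul (pow_le_one₀ ht.1.le ht.2)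
              (by simpa using hM _ h1) (abs_nonneg _) zero_le_one
          _ = M := one_mul M)
      (integrable_const M)
      (by
        filter_upwards [ae_restrict_mem measurableSet_Ioc] with t ht
        intro z hz
        have hz0 : 0 < z := (hball z hz).1
        have htz : 0 < t * z := mul_pos ht.1 hz0
        have h2 : HasDerivAt h (h' (t * z)) (t * z) :=
          (hder (t * z) htz.le).hasDerivAt (Ici_mem_nhds htz)
        have h1 : HasDerivAt (fun w : ℝ => t * w) t z := by
          simpa using (hasDerivAt_id z).const_mul t
        have h3 := (h2.comp z h1).const_mul (t ^ j)
        rw [show t ^ (j + 1) * h' (t * z) = t ^ j * (h' (t * z) * t) by ring]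
        exact h3)).2
  rcases eq_or_lt_of_le (Set.mem_Ici.mp hx) with hx0 | hxpos
  · rw [← hx0]
    apply hasDerivWithinAt_Ici_of_tendsto_deriv (s := Set.Ioi (0:ℝ))
    · exact fun z hz => (key z hz).differentiableAt.differentiableWithinAt
    · exact ((aux_cont h hh j) 0 Set.self_mem_Ici).mono Set.Ioi_subset_Ici_self
    · exact self_mem_nhdsWithin
    · have h1 : Tendsto (fun x => ∫ t in Set.Ioc (0:ℝ) 1, t ^ (j + 1) * h' (t * x)) (𝓝[>] (0:ℝ))
          (𝓝 (∫ t in Set.Ioc (0:ℝ) 1, t ^ (j + 1) * h' (t * 0))) :=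
        ((aux_cont h' hh' (j + 1)) 0 Set.self_mem_Ici).mono_left
          (nhdsWithin_mono 0 Set.Ioi_subset_Ici_self)
      apply h1.congr'
      filter_upwards [self_mem_nhdsWithin] with z hz
      exact ((key z hz).deriv).symm
  · exact (key x hxpos).hasDerivWithinAt

/-- For `f` in the weighted space `C^{k+1}_{pol,L}` on `[0,∞)` (`L ≥ 1`), the function
`(M₋₁f₀)(x) = (f(x) - f(0))/x` extends to a `C^k` function `F` on `[0,∞)` satisfying, for
every `j ∈ {0,…,k}`, `sup_{x≥0} |F^{(j)}(x)|/(1+x^L) ≤ 2^k ‖f‖_{j+1,L}`. -/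
theorem stmt15 (k L : ℕ) (hL : 1 ≤ L) (f : ℝ → ℝ)
    (hf : ContDiffOn ℝ (k + 1) f (Set.Ici 0))
    (hbound : ∃ C : ℝ, ∀ i ≤ k + 1, ∀ x : ℝ, 0 ≤ x →
      |iteratedDerivWithin i f (Set.Ici 0) x| ≤ C * (1 + x ^ L)) :
    ∃ F : ℝ → ℝ, ContDiffOn ℝ k F (Set.Ici 0) ∧
      (∀ x : ℝ, 0 < x → F x = (f x - f 0) / x) ∧
      ∀ j ≤ k,
        (⨆ x : Set.Ici (0 : ℝ),
            |iteratedDerivWithin j F (Set.Ici 0) (x : ℝ)| / (1 + (x : ℝ) ^ L)) ≤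
          2 ^ k * normML (j + 1) L f := by
  obtain ⟨C, hC⟩ := hbound
  have hus : UniqueDiffOn ℝ (Set.Ici (0:ℝ)) := uniqueDiffOn_Ici 0
  set g : ℕ → ℝ → ℝ := fun i => iteratedDerivWithin i f (Set.Ici 0) with hgdef
  have hgc : ∀ i ≤ k + 1, ContinuousOn (g i) (Set.Ici 0) := fun i hi =>
    hf.continuousOn_iteratedDerivWithin (by exact_mod_cast hi) hus
  have hgd : ∀ i < k + 1, ∀ y ∈ Set.Ici (0:ℝ),
      HasDerivWithinAt (g i) (g (i + 1) y) (Set.Ici 0) y := by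
    intro i hi y hy
    have h1 : DifferentiableWithinAt ℝ (g i) (Set.Ici 0) y :=
      hf.differentiableOn_iteratedDerivWithin (by exact_mod_cast hi) hus y hy
    have h2 := h1.hasDerivWithinAt
    have h3 : g (i + 1) y = derivWithin (g i) (Set.Ici 0) y :=
      congrFun iteratedDerivWithin_succ y
    rwa [← h3] at h2
  set F : ℕ → ℝ → ℝ := fun j x => ∫ t in Set.Ioc (0:ℝ) 1, t ^ j * g (j + 1) (t * x) with hFdef
  have hFder : ∀ j < k, ∀ x ∈ Set.Ici (0:ℝ),
      HasDerivWithinAt (F j) (F (j + 1) x) (Set.Ici 0) x := by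
    intro j hj x hx
    exact aux_deriv (g (j + 1)) (g (j + 2)) (hgc (j + 1) (by omega)) (hgc (j + 2) (by omega))
      (hgd (j + 1) (by omega)) j hx
  have hFc : ∀ j ≤ k, ContinuousOn (F j) (Set.Ici 0) := fun j hj =>
    aux_cont _ (hgc (j + 1) (by omega)) j
  have hiter : ∀ j ≤ k, ∀ x ∈ Set.Ici (0:ℝ),
      iteratedDerivWithin j (F 0) (Set.Ici 0) x = F j x := by
    intro j
    induction j with
    | zero => intro _ x _; simp
    | succ j ih =>
      intro hj x hx
      rw [iteratedDerivWithin_succ]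
      have e1 : derivWithin (iteratedDerivWithin j (F 0) (Set.Ici 0)) (Set.Ici 0) x
          = derivWithin (F j) (Set.Ici 0) x :=
        derivWithin_congr (fun y hy => ih (by omega) y hy) (ih (by omega) x hx)
      rw [e1]
      exact (hFder j (by omega) x hx).derivWithin (hus x hx)
  refine ⟨F 0, ?_, ?_, ?_⟩
  · -- smoothness
    apply (contDiffOn_iff_continuousOn_differentiableOn_deriv hus).2
    constructor
    · intro m hm
      have hm' : m ≤ k := by exact_mod_cast hm
      exact (hFc m hm').congr (hiter m hm')
    · intro m hm
      have hm' : m < k := by exact_mod_cast hm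
      have hd : DifferentiableOn ℝ (F m) (Set.Ici 0) := fun x hx =>
        (hFder m hm' x hx).differentiableWithinAt
      exact hd.congr (hiter m hm'.le)
  · -- value for x > 0
    intro x hx
    have h3 : (∫ u in (0:ℝ)..x, g 1 u) = f x - f 0 := by
      apply intervalIntegral.integral_eq_sub_of_hasDeriv_right_of_le hx.le
      · exact hf.continuousOn.mono fun y hy => hy.1
      · intro u hu
        have hdu := hgd 0 (by omega) u hu.1.le
        simp only [hgdef, iteratedDerivWithin_zero] at hdu
        exact ((hdu.hasDerivAt (Ici_mem_nhds hu.1)).hasDerivWithinAt)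
      · apply ContinuousOn.intervalIntegrable
        rw [Set.uIcc_of_le hx.le]
        exact (hgc 1 (by omega)).mono fun y hy => hy.1
    have h2 := intervalIntegral.integral_comp_mul_right (a := (0:ℝ)) (b := 1)
      (fun u => g 1 u) (ne_of_gt hx)
    have h1 : F 0 x = ∫ t in (0:ℝ)..1, g 1 (t * x) := by
      rw [hFdef]
      rw [intervalIntegral.integral_of_le zero_le_one]
      simp
    rw [h1, h2, zero_mul, one_mul, h3, smul_eq_mul, inv_mul_eq_div]
  · -- the bound
    intro j hj
    have hSle : ∀ i ≤ j + 1, ∀ y : ℝ, 0 ≤ y →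
        |iteratedDerivWithin i f (Set.Ici 0) y| / (1 + y ^ L) ≤ normML (j + 1) L f := by
      intro i hi y hy
      have hb1 : BddAbove (Set.range fun x : Set.Ici (0:ℝ) =>
          |iteratedDerivWithin i f (Set.Ici 0) x| / (1 + (x:ℝ) ^ L)) := by
        refine ⟨C, ?_⟩
        rintro _ ⟨x, rfl⟩
        have hx0 : (0:ℝ) ≤ x := x.2
        have h1 : (0:ℝ) < 1 + (x:ℝ) ^ L := by
          have := pow_nonneg hx0 L; linarith
        rw [div_le_iff₀ h1]
        exact hC i (by omega) x x.2
      have h2 : |iteratedDerivWithin i f (Set.Ici 0) y| / (1 + y ^ L)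
          ≤ ⨆ x : Set.Ici (0:ℝ), |iteratedDerivWithin i f (Set.Ici 0) x| / (1 + (x:ℝ) ^ L) :=
        le_ciSup hb1 ⟨y, hy⟩
      refine h2.trans ?_
      have hb2 : BddAbove (Set.range fun i : Fin (j + 1 + 1) =>
          ⨆ x : Set.Ici (0:ℝ),
            |iteratedDerivWithin (i:ℕ) f (Set.Ici 0) x| / (1 + (x:ℝ) ^ L)) :=
        Set.Finite.bddAbove (Set.finite_range _)
      have h4 := le_ciSup hb2 (⟨i, by omega⟩ : Fin (j + 1 + 1))
      exact h4
    set N := normML (j + 1) L f with hN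
    have hN0 : 0 ≤ N := le_trans (by positivity) (hSle 0 (by omega) 0 le_rfl)
    have hFb : ∀ x : ℝ, 0 ≤ x → |F j x| ≤ N * (1 + x ^ L) := by
      intro x hx
      have h1 : ‖∫ t in Set.Ioc (0:ℝ) 1, t ^ j * g (j + 1) (t * x)‖
          ≤ ∫ _t in Set.Ioc (0:ℝ) 1, N * (1 + x ^ L) := by
        apply norm_integral_le_of_norm_le (integrable_const _)
        filter_upwards [ae_restrict_mem measurableSet_Ioc] with t ht
        have htx : 0 ≤ t * x := mul_nonneg ht.1.le hx
        have h2 : |iteratedDerivWithin (j + 1) f (Set.Ici 0) (t * x)|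
            ≤ N * (1 + (t * x) ^ L) := by
          have h5 := hSle (j + 1) le_rfl (t * x) htx
          have h6 : (0:ℝ) < 1 + (t * x) ^ L := by
            have := pow_nonneg htx L; linarith
          rw [div_le_iff₀ h6] at h5; exact h5
        calc ‖t ^ j * g (j + 1) (t * x)‖ ≤ |g (j + 1) (t * x)| := by
              rw [norm_mul, Real.norm_eq_abs, Real.norm_eq_abs,
                abs_of_nonneg (pow_nonneg ht.1.le _)]
              exact mul_le_of_le_one_left (abs_nonneg _) (pow_le_one₀ ht.1.le ht.2)
          _ ≤ N * (1 + (t * x) ^ L) := h2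
          _ ≤ N * (1 + x ^ L) := by
              apply mul_le_mul_of_nonneg_left _ hN0
              have h7 : (t * x) ^ L ≤ x ^ L :=
                pow_le_pow_left₀ htx (mul_le_of_le_one_left hx ht.2) L
              linarith
      rw [integral_const] at h1
      simp only [measureReal_def, MeasurableSet.univ, Measure.restrict_apply, Set.univ_inter,
        Real.volume_Ioc, sub_zero, ENNReal.toReal_ofReal zero_le_one, one_smul] at h1
      exact h1
    apply Real.iSup_le
    · intro x
      have hx0 : (0:ℝ) ≤ x := x.2
      have h1 : (0:ℝ) < 1 + (x:ℝ) ^ L := by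
        have := pow_nonneg hx0 L; linarith
      rw [hiter j hj x x.2, div_le_iff₀ h1]
      calc |F j x| ≤ N * (1 + (x:ℝ) ^ L) := hFb x hx0
        _ ≤ 2 ^ k * N * (1 + (x:ℝ) ^ L) := by
            apply mul_le_mul_of_nonneg_right _ h1.le
            exact le_mul_of_one_le_left hN0 (one_le_pow₀ one_le_two)
    · exact mul_nonneg (by positivity) hN0
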